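/- Failure of the density propagation inequality near the origin: let c_1 = c_2 = 0 and ρ(x_1,x_2) = exp(−(x_1 + x_2)). There exists ε > 0 such that for all (x_1, x_2) ∈ (0,ε)×(0,ε), the divergence div(ρf)(x_1,x_2) = ∂(ρ f_1)/∂x_1 (x_1,x_2) + ∂(ρ f_2)/∂x_2 (x_1,x_2) is strictly negative. -/

import Mathlib

noncomputable section

/-- The constant `a = (4π²n + 3π²)/2`. -/
def a (n : ℕ) : ℝ := (4 * Real.pi ^ 2 * n + 3 * Real.pi ^ 2) / 2

/-- The function `g` from the example. -/
def g (n : ℕ) (r : ℝ) : ℝ :=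
  if |r| ≤ a n then
    Real.tanh (2 * r) +
      ∑ i ∈ Finset.Icc 1 n,
        Real.sign r * (1 + Real.sign r * Real.tanh (2 * (r - Real.sign r * (2 * Real.pi ^ 2 * i))))
  else
    Real.sign r * ((2 * n + 1) + (r - Real.sign r * a n) ^ 2)

/-- The function `h` from the example. -/
def h (n : ℕ) (r : ℝ) : ℝ :=
  Real.sin (r / (2 * Real.pi)) ^ 2 +
    ∑ i ∈ Finset.Icc 1 n,
      (Real.tanh (r - 2 * Real.pi ^ 2 * i) + 1) * Real.sin (r / (2 * Real.pi)) ^ 2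

/-- The vector field of subsystem `i`: its own state comes first, the other
subsystem's state second; `c` stands for `‖uᵢ‖_∞ / (a + 1)`. -/
def fvec (n : ℕ) (c : ℝ) (x y : ℝ) : ℝ :=
  -(25 + c) * g n x + 25 * h n y + c ^ 2

/-- The density `ρ(x₁,x₂) = e^{-(x₁+x₂)}`. -/
def ρpos : ℝ × ℝ → ℝ := fun p => Real.exp (-(p.1 + p.2))

lemma exp_add_exp_pos (t : ℝ) : 0 < Real.exp t + Real.exp (-t) :=
  add_pos (Real.exp_pos _) (Real.exp_pos _)

/-- tanh as a quotient of exponentials. -/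
lemma tanh_eq_exp (t : ℝ) :
    Real.tanh t = (Real.exp t - Real.exp (-t)) / (Real.exp t + Real.exp (-t)) := by
  rw [Real.tanh_eq_sinh_div_cosh, Real.sinh_eq, Real.cosh_eq]
  have := (exp_add_exp_pos t).ne'
  field_simp

lemma neg_one_lt_tanh' (t : ℝ) : -1 < Real.tanh t := by
  rw [tanh_eq_exp, lt_div_iff₀ (exp_add_exp_pos t)]
  nlinarith [Real.exp_pos t, Real.exp_pos (-t)]

lemma tanh_nonpos' {t : ℝ} (ht : t ≤ 0) : Real.tanh t ≤ 0 := by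
  rw [tanh_eq_exp]
  apply div_nonpos_of_nonpos_of_nonneg _ (exp_add_exp_pos t).le
  have := Real.exp_le_exp.2 (show t ≤ -t by linarith)
  linarith

lemma tanh_nonneg' {t : ℝ} (ht : 0 ≤ t) : 0 ≤ Real.tanh t := by
  rw [tanh_eq_exp]
  apply div_nonneg _ (exp_add_exp_pos t).le
  have := Real.exp_le_exp.2 (show -t ≤ t by linarith)
  linarith

lemma tanh_le_half {t : ℝ} (ht : t ≤ 1/2) : Real.tanh t ≤ 1/2 := by
  rw [tanh_eq_exp, div_le_iff₀ (exp_add_exp_pos t)]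
  have h1 : Real.exp t * Real.exp (-t) = 1 := by
    rw [← Real.exp_add]; simp
  have h2 : Real.exp t * Real.exp t ≤ 3 := by
    have : Real.exp t * Real.exp t = Real.exp (2*t) := by rw [← Real.exp_add]; ring_nf
    rw [this]
    calc Real.exp (2*t) ≤ Real.exp 1 := Real.exp_le_exp.2 (by linarith)
    _ ≤ 3 := by linarith [Real.exp_one_lt_d9]
  nlinarith [Real.exp_pos t, Real.exp_pos (-t)]

lemma hasDerivAt_tanh' (x : ℝ) : HasDerivAt Real.tanh (1 - Real.tanh x ^ 2) x := by
  have hc := Real.cosh_pos x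
  have hd : HasDerivAt (fun y => Real.sinh y / Real.cosh y)
      ((Real.cosh x * Real.cosh x - Real.sinh x * Real.sinh x) / Real.cosh x ^ 2) x :=
    (Real.hasDerivAt_sinh x).div (Real.hasDerivAt_cosh x) hc.ne'
  have hfun : Real.tanh = fun y => Real.sinh y / Real.cosh y := by
    funext y; exact Real.tanh_eq_sinh_div_cosh y
  rw [hfun]
  convert hd using 1
  have := Real.cosh_sq_sub_sinh_sq x
  have hc2 : Real.cosh x ^ 2 ≠ 0 := by positivity
  field_simp

/-- The smooth expression agreeing with `g` on `(0, 1/2)`. -/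
def Gg (n : ℕ) (s : ℝ) : ℝ :=
  Real.tanh (2 * s) +
    ∑ i ∈ Finset.Icc 1 n, (1 + Real.tanh (2 * (s - 2 * Real.pi ^ 2 * i)))

/-- Its derivative. -/
def Gg' (n : ℕ) (s : ℝ) : ℝ :=
  2 * (1 - Real.tanh (2 * s) ^ 2) +
    ∑ i ∈ Finset.Icc 1 n, 2 * (1 - Real.tanh (2 * (s - 2 * Real.pi ^ 2 * i)) ^ 2)

lemma hasDerivAt_Gg (n : ℕ) (x : ℝ) : HasDerivAt (Gg n) (Gg' n x) x := by
  have h0 : HasDerivAt (fun s : ℝ => Real.tanh (2 * s))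
      ((1 - Real.tanh (2 * x) ^ 2) * 2) x := by
    have := (hasDerivAt_tanh' (2 * x)).comp x ((hasDerivAt_id x).const_mul 2)
    simpa [Function.comp_def] using this
  have hsum : HasDerivAt
      (fun s : ℝ => ∑ i ∈ Finset.Icc 1 n, (1 + Real.tanh (2 * (s - 2 * Real.pi ^ 2 * i))))
      (∑ i ∈ Finset.Icc 1 n, (1 - Real.tanh (2 * (x - 2 * Real.pi ^ 2 * i)) ^ 2) * 2) x := by
    apply HasDerivAt.fun_sum
    intro i _
    have hin : HasDerivAt (fun s : ℝ => 2 * (s - 2 * Real.pi ^ 2 * i)) 2 x := by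
      simpa using (((hasDerivAt_id x).sub_const (2 * Real.pi ^ 2 * i)).const_mul 2)
    exact (((hasDerivAt_tanh' (2 * (x - 2 * Real.pi ^ 2 * i))).comp x hin)).const_add 1
  have := h0.add hsum
  convert this using 1
  · rfl
  · rfl
  · rfl
  unfold Gg'
  congr 1
  · ring
  · apply Finset.sum_congr rfl; intro i _; ring

lemma h_nonneg (n : ℕ) (y : ℝ) : 0 ≤ h n y := by
  unfold h
  apply add_nonneg (sq_nonneg _)
  apply Finset.sum_nonneg
  intro i _
  have := neg_one_lt_tanh' (y - 2 * Real.pi ^ 2 * i)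
  have hs := sq_nonneg (Real.sin (y / (2 * Real.pi)))
  nlinarith

lemma g_eq_Gg {n : ℕ} {x : ℝ} (hx : x ∈ Set.Ioo (0:ℝ) (1/2)) : g n x = Gg n x := by
  obtain ⟨hx0, hx1⟩ := hx
  have hpi := Real.pi_gt_three
  have habs : |x| ≤ a n := by
    rw [abs_of_pos hx0]
    unfold a
    have : (0:ℝ) ≤ (n:ℝ) := Nat.cast_nonneg n
    nlinarith
  have hsign : Real.sign x = 1 := Real.sign_of_pos hx0
  unfold g Gg
  rw [if_pos habs, hsign]
  simp

/-- Key inequality: `Gg x + 1 ≤ Gg' x` on `(0, 1/4)`. -/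
lemma Gg_lt_Gg' {n : ℕ} {x : ℝ} (hx : x ∈ Set.Ioo (0:ℝ) (1/4)) :
    Gg n x + 1 ≤ Gg' n x := by
  obtain ⟨hx0, hx1⟩ := hx
  have hpi := Real.pi_gt_three
  unfold Gg Gg'
  have hmain : Real.tanh (2 * x) + 1 ≤ 2 * (1 - Real.tanh (2 * x) ^ 2) := by
    have h1 : 0 ≤ Real.tanh (2 * x) := tanh_nonneg' (by linarith)
    have h2 : Real.tanh (2 * x) ≤ 1/2 := tanh_le_half (by linarith)
    nlinarith
  have hsum : ∑ i ∈ Finset.Icc 1 n, (1 + Real.tanh (2 * (x - 2 * Real.pi ^ 2 * i)))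
      ≤ ∑ i ∈ Finset.Icc 1 n, 2 * (1 - Real.tanh (2 * (x - 2 * Real.pi ^ 2 * i)) ^ 2) := by
    apply Finset.sum_le_sum
    intro i hi
    have hi1 : (1:ℝ) ≤ (i:ℝ) := by
      have := (Finset.mem_Icc.1 hi).1
      exact_mod_cast this
    have harg : 2 * (x - 2 * Real.pi ^ 2 * i) ≤ 0 := by nlinarith
    have h1 := neg_one_lt_tanh' (2 * (x - 2 * Real.pi ^ 2 * i))
    have h2 := tanh_nonpos' harg
    nlinarith
  linarith

/-- Derivative of the product with a fixed offset `C`. -/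
lemma key_deriv (n : ℕ) (y C : ℝ) {x : ℝ} (hx : x ∈ Set.Ioo (0:ℝ) (1/4)) :
    deriv (fun s => Real.exp (-(s + y)) * (-25 * g n s + C)) x
      = Real.exp (-(x + y)) * (25 * Gg n x - C - 25 * Gg' n x) := by
  obtain ⟨hx0, hx1⟩ := hx
  have hmem : Set.Ioo (0:ℝ) (1/2) ∈ nhds x := Ioo_mem_nhds hx0 (by linarith)
  have hEq : (fun s => Real.exp (-(s + y)) * (-25 * g n s + C))
      =ᶠ[nhds x] (fun s => Real.exp (-(s + y)) * (-25 * Gg n s + C)) := by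
    filter_upwards [hmem] with s hs
    rw [g_eq_Gg hs]
  rw [hEq.deriv_eq]
  have h1 : HasDerivAt (fun s : ℝ => Real.exp (-(s + y))) (-Real.exp (-(x + y))) x := by
    have hin : HasDerivAt (fun s : ℝ => -(s + y)) (-1) x := ((hasDerivAt_id x).add_const y).neg
    simpa [Function.comp_def] using (Real.hasDerivAt_exp (-(x + y))).comp x hin
  have h2 : HasDerivAt (fun s : ℝ => -25 * Gg n s + C) (-25 * Gg' n x) x :=
    ((hasDerivAt_Gg n x).const_mul (-25)).add_const C
  have := (h1.fun_mul h2).deriv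
  rw [this]
  ring

/-- failure of the density propagation inequality near the origin
for the zero-input system: on a small square `(0,ε)×(0,ε)` the divergence
`div(ρf)(x) = ∂(ρf₁)/∂x₁ + ∂(ρf₂)/∂x₂` is strictly negative. -/
theorem divergence_negative_near_origin (n : ℕ) :
    ∃ ε > (0:ℝ), ∀ x₁ ∈ Set.Ioo 0 ε, ∀ x₂ ∈ Set.Ioo 0 ε,
      deriv (fun s => ρpos (s, x₂) * fvec n 0 s x₂) x₁ +
        deriv (fun s => ρpos (x₁, s) * fvec n 0 s x₁) x₂ < 0 := by
  refine ⟨1/4, by norm_num, fun x₁ hx₁ x₂ hx₂ => ?_⟩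
  have e1 : (fun s => ρpos (s, x₂) * fvec n 0 s x₂)
      = fun s => Real.exp (-(s + x₂)) * (-25 * g n s + 25 * h n x₂) := by
    funext s; simp only [ρpos, fvec]; ring
  have e2 : (fun s => ρpos (x₁, s) * fvec n 0 s x₁)
      = fun s => Real.exp (-(s + x₁)) * (-25 * g n s + 25 * h n x₁) := by
    funext s; simp only [ρpos, fvec]; rw [add_comm x₁ s]; ring
  rw [e1, e2, key_deriv n x₂ (25 * h n x₂) hx₁, key_deriv n x₁ (25 * h n x₁) hx₂]
  have k1 := Gg_lt_Gg' (n := n) hx₁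
  have k2 := Gg_lt_Gg' (n := n) hx₂
  have hh1 := h_nonneg n x₁
  have hh2 := h_nonneg n x₂
  have hp1 := Real.exp_pos (-(x₁ + x₂))
  have hp2 := Real.exp_pos (-(x₂ + x₁))
  nlinarith

end
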